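/- Let q ≥ 1 and a be natural numbers with a < q, and let g_c, G_cp : ℝ → ℝ → ℝ be kernels, each continuous on the triangular domain D_T := {(t,τ) : 0 ≤ t ≤ T, 0 ≤ τ ≤ t} for every T > 0, with G_cp(t,τ) ≥ g_c(t,τ) ≥ 0 for all 0 ≤ τ ≤ t. Define K(t,σ) := ∫_σ^t G_cp(t,τ)·(τ−σ)^(q−1)/(q−1)! dτ. Assume: (i) [stability] for every ε > 0 there exists δ > 0 such that every continuous φ with |φ(t)| < δ for all t ≥ 0 and every continuous x with x(t) = ∫₀ᵗ K(t,τ)x(τ)dτ + φ(t) for all t ≥ 0 satisfy |x(t)| < ε for all t ≥ 0; (ii) [asymptotic stability] there exists δ₁ > 0 such that every continuous φ with |φ(t)| < δ₁ for all t ≥ 0 and φ(t) → 0 as t → ∞, and every continuous x solving the same equation, satisfy x(t) → 0 as t → ∞; (iii) there exists M ≥ 0 with ∫₀ᵗ K(t,σ)dσ ≤ M for all t ≥ 0; (iv) for every T > 0, ∫₀ᵀ K(t,σ)dσ → 0 as t → ∞; (v) there exists M₁ ≥ 0 with ∫₀^(min(t,1)) g_c(t,τ)dτ ≤ M₁ for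 all t ≥ 0; (vi) lim_{t→∞} ∫₀^(min(t,1)) g_c(t,τ)dτ = 0; (vii) lim_{T→0⁺} sup_{t≥0} ∫₀^(min(t,T)) g_c(t,τ)dτ = 0. Then for every ε > 0 there exists h ≠ 0 such that every continuous u satisfying u(t) = ∫₀ᵗ K(t,τ)u(τ)dτ + (h/a!)·∫₀ᵗ g_c(t,τ)·τ^a dτ for all t ≥ 0 satisfies both |u(t)| ≤ ε for all t ≥ 0 and u(t) → 0 as t → ∞. (Paper's Theorem 8: untraceable stealth of polynomial FDIAs of degree a < q.) -/

import Mathlib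

open intervalIntegral Set Filter

/-- A kernel `g : ℝ → ℝ → ℝ` is continuous on the triangular domain
`D_T = {(t,τ) : 0 ≤ t ≤ T, 0 ≤ τ ≤ t}` for every `T > 0`. -/
def ContinuousOnTriangles (g : ℝ → ℝ → ℝ) : Prop :=
  ∀ T : ℝ, 0 < T →
    ContinuousOn (fun p : ℝ × ℝ => g p.1 p.2)
      {p : ℝ × ℝ | 0 ≤ p.1 ∧ p.1 ≤ T ∧ 0 ≤ p.2 ∧ p.2 ≤ p.1}

open MeasureTheory

lemma contOn_full {g : ℝ → ℝ → ℝ} (h : ContinuousOnTriangles g) :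
    ContinuousOn (fun p : ℝ × ℝ => g p.1 p.2) {p : ℝ × ℝ | 0 ≤ p.2 ∧ p.2 ≤ p.1} := by
  intro p hp
  obtain ⟨h1, h2⟩ := hp
  have h0 : (0:ℝ) ≤ p.1 := le_trans h1 h2
  have hT : (0:ℝ) < p.1 + 1 := by linarith
  have hc := h (p.1 + 1) hT p ⟨h0, by linarith, h1, h2⟩
  apply hc.mono_of_mem_nhdsWithin
  have hU : {p' : ℝ × ℝ | p'.1 < p.1 + 1} ∈ nhds p := by
    apply IsOpen.mem_nhds
    · exact isOpen_lt continuous_fst continuous_const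
    · simp
  refine mem_of_superset (Filter.inter_mem self_mem_nhdsWithin
    (mem_nhdsWithin_of_mem_nhds hU)) ?_
  rintro q ⟨⟨hq1, hq2⟩, hq3⟩
  exact ⟨le_trans hq1 hq2, le_of_lt hq3, hq1, hq2⟩

noncomputable def ext2 (g : ℝ → ℝ → ℝ) : ℝ → ℝ → ℝ :=
  fun t τ => g (max t 0) (min (max τ 0) (max t 0))

lemma ext2_cont {g : ℝ → ℝ → ℝ} (h : ContinuousOnTriangles g) :
    Continuous (fun p : ℝ × ℝ => ext2 g p.1 p.2) := by
  have he : Continuous (fun p : ℝ × ℝ => ((max p.1 0, min (max p.2 0) (max p.1 0)) : ℝ × ℝ)) := by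
    fun_prop
  exact (contOn_full h).comp_continuous he
    (fun p => ⟨le_min (le_max_right _ _) (le_max_right _ _), min_le_right _ _⟩)

lemma ext2_eq {g : ℝ → ℝ → ℝ} {t τ : ℝ} (h1 : 0 ≤ τ) (h2 : τ ≤ t) : ext2 g t τ = g t τ := by
  unfold ext2
  rw [max_eq_left (le_trans h1 h2), max_eq_left h1, min_eq_left h2]

lemma intIntegrable_congr' {f g : ℝ → ℝ} {a b : ℝ} (h : ∀ x ∈ Set.uIoc a b, f x = g x)
    (hg : IntervalIntegrable g volume a b) : IntervalIntegrable f volume a b := by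
  rw [intervalIntegrable_iff] at *
  exact hg.congr_fun (fun x hx => (h x hx).symm) measurableSet_uIoc


set_option maxHeartbeats 1000000 in
/-- **Paper's Theorem 8 (untraceable stealth).** Under stability and asymptotic stability
of the closed-loop LVIE with kernel `K(t,σ) = ∫_σ^t G_cp(t,τ)(τ-σ)^(q-1)/(q-1)! dτ`
together with the kernel regularity conditions (iii)–(vii), a polynomial FDIA of degree
`a < q` admits a nonzero weight `h` making it untraceably stealthy with respect to `u`. -/
theorem untraceable_stealth_of_polynomial_fdia
    (q a : ℕ) (hq : 1 ≤ q) (haq : a < q)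
    (g_c G_cp : ℝ → ℝ → ℝ)
    (hgc_cont : ContinuousOnTriangles g_c)
    (hGcp_cont : ContinuousOnTriangles G_cp)
    (hnonneg : ∀ t τ : ℝ, 0 ≤ τ → τ ≤ t → 0 ≤ g_c t τ)
    (hdom : ∀ t τ : ℝ, 0 ≤ τ → τ ≤ t → g_c t τ ≤ G_cp t τ)
    (K : ℝ → ℝ → ℝ)
    (hK : ∀ t σ : ℝ, K t σ =
      ∫ τ in σ..t, G_cp t τ * (τ - σ) ^ (q - 1) / (Nat.factorial (q - 1) : ℝ))
    -- (i) stability of the LVIE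
    (hstab : ∀ ε : ℝ, 0 < ε → ∃ δ : ℝ, 0 < δ ∧
      ∀ φ : ℝ → ℝ, Continuous φ → (∀ t : ℝ, 0 ≤ t → |φ t| < δ) →
      ∀ x : ℝ → ℝ, Continuous x →
        (∀ t : ℝ, 0 ≤ t → x t = (∫ τ in (0:ℝ)..t, K t τ * x τ) + φ t) →
        ∀ t : ℝ, 0 ≤ t → |x t| < ε)
    -- (ii) asymptotic stability of the LVIE
    (hAS : ∃ δ₁ : ℝ, 0 < δ₁ ∧
      ∀ φ : ℝ → ℝ, Continuous φ → (∀ t : ℝ, 0 ≤ t → |φ t| < δ₁) →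
        Tendsto φ atTop (nhds 0) →
      ∀ x : ℝ → ℝ, Continuous x →
        (∀ t : ℝ, 0 ≤ t → x t = (∫ τ in (0:ℝ)..t, K t τ * x τ) + φ t) →
        Tendsto x atTop (nhds 0))
    -- (iii) uniform boundedness of the closed-loop kernel integral
    (M : ℝ) (hM : 0 ≤ M)
    (hbound : ∀ t : ℝ, 0 ≤ t → (∫ σ in (0:ℝ)..t, K t σ) ≤ M)
    -- (iv) vanishing of truncated closed-loop kernel integrals
    (hKvanish : ∀ T : ℝ, 0 < T →
      Tendsto (fun t : ℝ => ∫ σ in (0:ℝ)..T, K t σ) atTop (nhds 0))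
    -- (v) uniform boundedness of the controller kernel near τ = 0
    (M₁ : ℝ) (hM₁ : 0 ≤ M₁)
    (hbound₁ : ∀ t : ℝ, 0 ≤ t → (∫ τ in (0:ℝ)..(min t 1), g_c t τ) ≤ M₁)
    -- (vi) vanishing of the controller kernel integral near τ = 0
    (hgcvanish : Tendsto (fun t : ℝ => ∫ τ in (0:ℝ)..(min t 1), g_c t τ) atTop (nhds 0))
    -- (vii) uniform small-T vanishing of the controller kernel integral
    (hsmall : ∀ ε : ℝ, 0 < ε → ∃ T₀ : ℝ, 0 < T₀ ∧
      ∀ T : ℝ, 0 < T → T < T₀ → ∀ t : ℝ, 0 ≤ t →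
        (∫ τ in (0:ℝ)..(min t T), g_c t τ) < ε) :
    ∀ ε : ℝ, 0 < ε → ∃ h : ℝ, h ≠ 0 ∧
      ∀ u : ℝ → ℝ, Continuous u →
        (∀ t : ℝ, 0 ≤ t → u t = (∫ τ in (0:ℝ)..t, K t τ * u τ) +
          (h / (Nat.factorial a : ℝ)) * ∫ τ in (0:ℝ)..t, g_c t τ * τ ^ a) →
        (∀ t : ℝ, 0 ≤ t → |u t| ≤ ε) ∧ Tendsto u atTop (nhds 0) := by
  obtain ⟨δ₁, hδ₁pos, hAS'⟩ := hAS
  intro ε hε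
  obtain ⟨δ, hδpos, hstab'⟩ := hstab ε hε
  -- extended kernels
  set gt : ℝ → ℝ → ℝ := ext2 g_c with hgt_def
  set Gt : ℝ → ℝ → ℝ := ext2 G_cp with hGt_def
  have hgtc : Continuous (fun p : ℝ × ℝ => gt p.1 p.2) := ext2_cont hgc_cont
  have hGtc : Continuous (fun p : ℝ × ℝ => Gt p.1 p.2) := ext2_cont hGcp_cont
  have haq1 : a ≤ q - 1 := by omega
  -- constants
  have hfacpos : (0:ℝ) < (Nat.factorial (q-1) : ℝ) := by positivity
  set c₀ : ℝ := 1 / (2 ^ (q-1) * (Nat.factorial (q-1) : ℝ)) with hc₀def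
  have hc₀pos : 0 < c₀ := by positivity
  set B : ℝ := M₁ + 2 * M / c₀ with hBdef
  have hBnn : 0 ≤ B := by positivity
  set δ' : ℝ := min δ δ₁ with hδ'def
  have hδ'pos : 0 < δ' := lt_min hδpos hδ₁pos
  set c : ℝ := δ' / (2 * (B + 1)) with hcdef
  have hcpos : 0 < c := by positivity
  refine ⟨(Nat.factorial a : ℝ) * c, by positivity, ?_⟩
  have hfa : (Nat.factorial a : ℝ) ≠ 0 := by positivity
  have hhc : (Nat.factorial a : ℝ) * c / (Nat.factorial a : ℝ) = c := by
    field_simp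
  -- the primitive F
  set F : ℝ → ℝ := fun s => ∫ τ in (0:ℝ)..s, gt s τ * τ ^ a with hFdef
  have hFcont : Continuous F := by
    apply intervalIntegral.continuous_parametric_intervalIntegral_of_continuous
      (f := fun s τ => gt s τ * τ ^ a) (μ := volume) (s := fun x : ℝ => x)
    · exact hgtc.mul (continuous_pow a |>.comp continuous_snd)
    · exact continuous_id
  -- pointwise continuity in second argument
  have hgt1 : ∀ t : ℝ, Continuous (fun τ => gt t τ) := fun t =>
    hgtc.comp (Continuous.prodMk_right t)
  have hGt1 : ∀ t : ℝ, Continuous (fun τ => Gt t τ) := fun t =>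
    hGtc.comp (Continuous.prodMk_right t)
  -- F agrees with real forcing integral
  have hFeq : ∀ t : ℝ, 0 ≤ t →
      (∫ τ in (0:ℝ)..t, g_c t τ * τ ^ a) = F t := by
    intro t ht
    apply intervalIntegral.integral_congr
    intro τ hτ
    rw [Set.uIcc_of_le ht] at hτ
    simp only [hgt_def]
    rw [ext2_eq hτ.1 hτ.2]
  -- nonnegativity of g_c, G_cp pieces
  have hGnn : ∀ t τ : ℝ, 0 ≤ τ → τ ≤ t → 0 ≤ G_cp t τ := fun t τ h1 h2 =>
    le_trans (hnonneg t τ h1 h2) (hdom t τ h1 h2)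
  -- K is nonneg
  have hKnn : ∀ t σ : ℝ, 0 ≤ σ → σ ≤ t → 0 ≤ K t σ := by
    intro t σ h0 hσt
    rw [hK]
    apply intervalIntegral.integral_nonneg hσt
    intro τ hτ
    have h0τ : 0 ≤ τ := le_trans h0 hτ.1
    have h1 : 0 ≤ G_cp t τ := hGnn t τ h0τ hτ.2
    have h2 : 0 ≤ τ - σ := sub_nonneg.2 hτ.1
    exact div_nonneg (mul_nonneg h1 (pow_nonneg h2 _)) hfacpos.le
  -- splitting of F
  have hIgt : ∀ t x y : ℝ, IntervalIntegrable (fun τ => gt t τ * τ ^ a) volume x y :=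
    fun t x y => ((hgt1 t).mul (continuous_pow a)).intervalIntegrable x y
  have hFsplit : ∀ t : ℝ, 0 ≤ t →
      F t = (∫ τ in (0:ℝ)..(min t 1), gt t τ * τ ^ a)
        + ∫ τ in (min t 1)..t, gt t τ * τ ^ a := by
    intro t _
    rw [intervalIntegral.integral_add_adjacent_intervals (hIgt t 0 (min t 1)) (hIgt t (min t 1) t)]
  -- A bounds
  have hAle : ∀ t : ℝ, 0 ≤ t →
      (∫ τ in (0:ℝ)..(min t 1), gt t τ * τ ^ a) ≤ ∫ τ in (0:ℝ)..(min t 1), g_c t τ := by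
    intro t ht
    have hmn : 0 ≤ min t 1 := le_min ht zero_le_one
    have heqon : ∀ x ∈ Set.uIoc (0:ℝ) (min t 1), g_c t x = gt t x := by
      intro x hx
      rw [Set.uIoc_of_le hmn] at hx
      exact (ext2_eq (le_of_lt hx.1) (le_trans hx.2 (min_le_left _ _))).symm
    apply intervalIntegral.integral_mono_on hmn (hIgt t 0 (min t 1))
      (intIntegrable_congr' heqon ((hgt1 t).intervalIntegrable 0 (min t 1)))
    intro x hx
    have hx0 : 0 ≤ x := hx.1
    have hxt : x ≤ t := le_trans hx.2 (min_le_left _ _)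
    have hx1 : x ≤ 1 := le_trans hx.2 (min_le_right _ _)
    rw [hgt_def, ext2_eq hx0 hxt]
    exact mul_le_of_le_one_right (hnonneg t x hx0 hxt) (pow_le_one₀ hx0 hx1)
  have hAnn : ∀ t : ℝ, 0 ≤ t → 0 ≤ ∫ τ in (0:ℝ)..(min t 1), gt t τ * τ ^ a := by
    intro t ht
    apply intervalIntegral.integral_nonneg (le_min ht zero_le_one)
    intro x hx
    have hx0 : 0 ≤ x := hx.1
    have hxt : x ≤ t := le_trans hx.2 (min_le_left _ _)
    rw [hgt_def, ext2_eq hx0 hxt]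
    have := hnonneg t x hx0 hxt
    positivity
  have hJnn : ∀ t : ℝ, 0 ≤ t → 0 ≤ ∫ τ in (min t 1)..t, gt t τ * τ ^ a := by
    intro t ht
    apply intervalIntegral.integral_nonneg (min_le_left _ _)
    intro x hx
    have hx0 : 0 ≤ x := le_trans (le_min ht zero_le_one) hx.1
    rw [hgt_def, ext2_eq hx0 hx.2]
    have := hnonneg t x hx0 hx.2
    positivity
  -- key: integrability/continuity of K t on [0, t]
  have hKcongr : ∀ t : ℝ, 0 ≤ t → ∀ σ ∈ Set.Icc (0:ℝ) t,
      K t σ = (∫ τ in (0:ℝ)..t, Gt t τ * (τ - σ) ^ (q-1) / (Nat.factorial (q-1) : ℝ))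
        - ∫ τ in (0:ℝ)..σ, Gt t τ * (τ - σ) ^ (q-1) / (Nat.factorial (q-1) : ℝ) := by
    intro t ht σ hσ
    have hIG : ∀ x y : ℝ, IntervalIntegrable
        (fun τ => Gt t τ * (τ - σ) ^ (q-1) / (Nat.factorial (q-1) : ℝ)) volume x y := by
      intro x y
      exact (((hGt1 t).mul (by fun_prop)).div_const _).intervalIntegrable x y
    rw [hK, intervalIntegral.integral_interval_sub_left (hIG 0 t) (hIG 0 σ)]
    apply intervalIntegral.integral_congr
    intro τ hτ
    rw [Set.uIcc_of_le hσ.2] at hτ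
    have h0τ : 0 ≤ τ := le_trans hσ.1 hτ.1
    simp only [hGt_def]
    rw [ext2_eq h0τ hτ.2]
  have hKcont : ∀ t : ℝ, 0 ≤ t → ∃ Kc : ℝ → ℝ, Continuous Kc ∧
      ∀ σ ∈ Set.Icc (0:ℝ) t, K t σ = Kc σ := by
    intro t ht
    refine ⟨fun σ =>
      (∫ τ in (0:ℝ)..t, Gt t τ * (τ - σ) ^ (q-1) / (Nat.factorial (q-1) : ℝ))
        - ∫ τ in (0:ℝ)..σ, Gt t τ * (τ - σ) ^ (q-1) / (Nat.factorial (q-1) : ℝ),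
      ?_, hKcongr t ht⟩
    have huc : Continuous (Function.uncurry fun (σ τ : ℝ) =>
        Gt t τ * (τ - σ) ^ (q-1) / (Nat.factorial (q-1) : ℝ)) := by
      apply Continuous.div_const
      exact ((hGt1 t).comp continuous_snd).mul (by fun_prop)
    exact (intervalIntegral.continuous_parametric_intervalIntegral_of_continuous'
        huc 0 t).sub
      (intervalIntegral.continuous_parametric_intervalIntegral_of_continuous huc continuous_id)
  have hKii : ∀ t : ℝ, 0 ≤ t → ∀ x y : ℝ, x ∈ Set.Icc (0:ℝ) t → y ∈ Set.Icc (0:ℝ) t →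
      IntervalIntegrable (K t) volume x y := by
    intro t ht x y hx hy
    obtain ⟨Kc, hKc, hKceq⟩ := hKcont t ht
    apply intIntegrable_congr' (g := Kc) ?_ (hKc.intervalIntegrable x y)
    intro z hz
    apply hKceq
    have := Set.uIoc_subset_uIcc hz
    rcases Set.mem_uIcc.1 this with h | h
    · exact ⟨le_trans hx.1 h.1, le_trans h.2 hy.2⟩
    · exact ⟨le_trans hy.1 h.1, le_trans h.2 hx.2⟩
  -- J bound via K, for t ≥ 1
  have hJkey : ∀ t : ℝ, 1 ≤ t →
      c₀ * (∫ τ in (min t 1)..t, gt t τ * τ ^ a) ≤ 2 * ∫ σ in (0:ℝ)..(1/2:ℝ), K t σ := by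
    intro t ht1
    have ht0 : (0:ℝ) ≤ t := le_trans zero_le_one ht1
    have hmin : min t 1 = 1 := min_eq_right ht1
    rw [hmin]
    set J : ℝ := ∫ τ in (1:ℝ)..t, gt t τ * τ ^ a with hJdef
    have key : ∀ σ ∈ Set.Icc (0:ℝ) (1/2:ℝ), c₀ * J ≤ K t σ := by
      intro σ hσ
      have hσt : σ ≤ t := le_trans (le_trans hσ.2 (by norm_num)) ht1
      have hIG : ∀ x y : ℝ, IntervalIntegrable
          (fun τ => Gt t τ * (τ - σ) ^ (q-1) / (Nat.factorial (q-1) : ℝ)) volume x y := by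
        intro x y
        exact (((hGt1 t).mul (by fun_prop)).div_const _).intervalIntegrable x y
      have hKeq : K t σ = (∫ τ in σ..(1:ℝ), Gt t τ * (τ - σ) ^ (q-1) / (Nat.factorial (q-1) : ℝ))
          + ∫ τ in (1:ℝ)..t, Gt t τ * (τ - σ) ^ (q-1) / (Nat.factorial (q-1) : ℝ) := by
        rw [hK, intervalIntegral.integral_add_adjacent_intervals (hIG σ 1) (hIG 1 t)]
        apply intervalIntegral.integral_congr
        intro τ hτ
        rw [Set.uIcc_of_le hσt] at hτ
        have h0τ : 0 ≤ τ := le_trans hσ.1 hτ.1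
        simp only [hGt_def]
        rw [ext2_eq h0τ hτ.2]
      have hfirst : 0 ≤ ∫ τ in σ..(1:ℝ), Gt t τ * (τ - σ) ^ (q-1) / (Nat.factorial (q-1) : ℝ) := by
        apply intervalIntegral.integral_nonneg (le_trans hσ.2 (by norm_num))
        intro τ hτ
        have h0τ : 0 ≤ τ := le_trans hσ.1 hτ.1
        have hτt : τ ≤ t := le_trans hτ.2 ht1
        rw [hGt_def, ext2_eq h0τ hτt]
        have h1 := hGnn t τ h0τ hτt
        have h2 : 0 ≤ τ - σ := sub_nonneg.2 hτ.1
        positivity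
      have hsecond : c₀ * J ≤
          ∫ τ in (1:ℝ)..t, Gt t τ * (τ - σ) ^ (q-1) / (Nat.factorial (q-1) : ℝ) := by
        rw [hJdef, ← intervalIntegral.integral_const_mul]
        apply intervalIntegral.integral_mono_on ht1
          (((continuous_const.mul ((hgt1 t).mul (continuous_pow a))).intervalIntegrable 1 t))
          (hIG 1 t)
        intro τ hτ
        have h1τ : (1:ℝ) ≤ τ := hτ.1
        have h0τ : (0:ℝ) ≤ τ := le_trans zero_le_one h1τ
        have hτt : τ ≤ t := hτ.2
        show c₀ * (gt t τ * τ ^ a) ≤ _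
        rw [hgt_def, ext2_eq h0τ hτt, hGt_def, ext2_eq h0τ hτt]
        have hgle : g_c t τ ≤ G_cp t τ := hdom t τ h0τ hτt
        have hgnn : 0 ≤ g_c t τ := hnonneg t τ h0τ hτt
        have hpow : τ ^ a ≤ 2 ^ (q-1) * (τ - σ) ^ (q-1) := by
          have e1 : τ ^ a ≤ τ ^ (q-1) := pow_le_pow_right₀ h1τ haq1
          have e2 : τ / 2 ≤ τ - σ := by
            have : σ ≤ 1/2 := hσ.2
            linarith
          have e3 : (τ/2) ^ (q-1) ≤ (τ - σ) ^ (q-1) :=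
            pow_le_pow_left₀ (by linarith) e2 _
          have e4 : (τ/2 : ℝ) ^ (q-1) = τ ^ (q-1) / 2 ^ (q-1) := div_pow τ 2 (q-1)
          calc τ ^ a ≤ τ ^ (q-1) := e1
            _ = 2 ^ (q-1) * (τ ^ (q-1) / 2 ^ (q-1)) := by field_simp
            _ ≤ 2 ^ (q-1) * (τ - σ) ^ (q-1) := by
                rw [← e4]; exact mul_le_mul_of_nonneg_left e3 (by positivity)
        calc c₀ * (g_c t τ * τ ^ a)
            ≤ c₀ * (g_c t τ * (2 ^ (q-1) * (τ - σ) ^ (q-1))) := by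
              apply mul_le_mul_of_nonneg_left _ (le_of_lt hc₀pos)
              exact mul_le_mul_of_nonneg_left hpow hgnn
          _ = g_c t τ * (τ - σ) ^ (q-1) / (Nat.factorial (q-1) : ℝ) := by
              rw [hc₀def]; field_simp
          _ ≤ G_cp t τ * (τ - σ) ^ (q-1) / (Nat.factorial (q-1) : ℝ) := by
              have hx : (0:ℝ) ≤ (τ - σ) ^ (q-1) :=
                pow_nonneg (by linarith [hσ.2, h1τ] : (0:ℝ) ≤ τ - σ) _
              rw [div_le_div_iff₀ hfacpos hfacpos]
              nlinarith [mul_le_mul_of_nonneg_right hgle hx]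
      rw [hKeq]
      linarith
    -- integrate over σ ∈ [0, 1/2]
    have hint : ∫ σ in (0:ℝ)..(1/2:ℝ), (c₀ * J) ≤ ∫ σ in (0:ℝ)..(1/2:ℝ), K t σ := by
      apply intervalIntegral.integral_mono_on (by norm_num)
        (intervalIntegrable_const)
        (hKii t ht0 0 (1/2) ⟨le_refl 0, ht0⟩ ⟨by norm_num, le_trans (by norm_num) ht1⟩)
      exact key
    rw [intervalIntegral.integral_const] at hint
    simp only [smul_eq_mul] at hint
    linarith
  -- bound for ∫0^{1/2} K ≤ M for t ≥ 1
  have hKhalf_le : ∀ t : ℝ, 1 ≤ t → (∫ σ in (0:ℝ)..(1/2:ℝ), K t σ) ≤ M := by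
    intro t ht1
    have ht0 : (0:ℝ) ≤ t := le_trans zero_le_one ht1
    have hhalf : (1/2:ℝ) ≤ t := le_trans (by norm_num) ht1
    have hsplit : (∫ σ in (0:ℝ)..t, K t σ)
        = (∫ σ in (0:ℝ)..(1/2:ℝ), K t σ) + ∫ σ in (1/2:ℝ)..t, K t σ := by
      rw [intervalIntegral.integral_add_adjacent_intervals
        (hKii t ht0 0 (1/2) ⟨le_refl 0, ht0⟩ ⟨by norm_num, hhalf⟩)
        (hKii t ht0 (1/2) t ⟨by norm_num, hhalf⟩ ⟨ht0, le_refl t⟩)]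
    have htail : 0 ≤ ∫ σ in (1/2:ℝ)..t, K t σ := by
      apply intervalIntegral.integral_nonneg hhalf
      intro σ hσ
      exact hKnn t σ (le_trans (by norm_num) hσ.1) hσ.2
    have := hbound t ht0
    rw [hsplit] at this
    linarith
  -- global bound on F
  have hFbound : ∀ t : ℝ, 0 ≤ t → F t ≤ B := by
    intro t ht
    rw [hFsplit t ht]
    rcases le_or_gt t 1 with hle | hlt
    · have hmin : min t 1 = t := min_eq_left hle
      have hJ0 : (∫ τ in (min t 1)..t, gt t τ * τ ^ a) = 0 := by
        rw [hmin, intervalIntegral.integral_same]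
      have := le_trans (hAle t ht) (hbound₁ t ht)
      rw [hJ0, hBdef]
      have h2 : 0 ≤ 2 * M / c₀ := by positivity
      linarith
    · have ht1 : (1:ℝ) ≤ t := le_of_lt hlt
      have h1 := le_trans (hAle t ht) (hbound₁ t ht)
      have h2 := hJkey t ht1
      have h3 := hKhalf_le t ht1
      have h4 : (∫ τ in (min t 1)..t, gt t τ * τ ^ a) ≤ 2 * M / c₀ := by
        rw [le_div_iff₀ hc₀pos]
        nlinarith
      rw [hBdef]
      linarith
  have hFnn : ∀ t : ℝ, 0 ≤ t → 0 ≤ F t := by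
    intro t ht
    rw [hFsplit t ht]
    exact add_nonneg (hAnn t ht) (hJnn t ht)
  -- tendsto of F
  have hFtend : Tendsto F atTop (nhds 0) := by
    apply squeeze_zero' (Eventually.filter_mono (le_refl _) ?_)
      (g := fun t => (∫ τ in (0:ℝ)..(min t 1), g_c t τ) + (2 / c₀) * ∫ σ in (0:ℝ)..(1/2:ℝ), K t σ)
      ?_ ?_
    · filter_upwards [eventually_ge_atTop (1:ℝ)] with t ht1
      exact hFnn t (le_trans zero_le_one ht1)
    · filter_upwards [eventually_ge_atTop (1:ℝ)] with t ht1
      have ht0 : (0:ℝ) ≤ t := le_trans zero_le_one ht1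
      rw [hFsplit t ht0]
      have h1 := hAle t ht0
      have h2 := hJkey t ht1
      have h4 : (∫ τ in (min t 1)..t, gt t τ * τ ^ a)
          ≤ (2 / c₀) * ∫ σ in (0:ℝ)..(1/2:ℝ), K t σ := by
        rw [div_mul_eq_mul_div, le_div_iff₀ hc₀pos]
        nlinarith
      linarith
    · have := (hgcvanish.add ((hKvanish (1/2) (by norm_num)).const_mul (2 / c₀)))
      simpa using this
  -- the forcing function
  set φ : ℝ → ℝ := fun t => c * F (max t 0) with hφdef
  have hφcont : Continuous φ := continuous_const.mul (hFcont.comp (continuous_id.max continuous_const))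
  have hφval : ∀ t : ℝ, 0 ≤ t → φ t = c * F t := by
    intro t ht
    rw [hφdef]
    simp only [max_eq_left ht]
  have hφsmall : ∀ t : ℝ, 0 ≤ t → |φ t| < δ' := by
    intro t ht
    rw [hφval t ht, abs_of_nonneg (mul_nonneg (le_of_lt hcpos) (hFnn t ht))]
    calc c * F t ≤ c * B := mul_le_mul_of_nonneg_left (hFbound t ht) (le_of_lt hcpos)
      _ < δ' := by
        rw [hcdef]
        rw [div_mul_eq_mul_div, div_lt_iff₀ (by positivity)]
        nlinarith
  have hφtend : Tendsto φ atTop (nhds 0) := by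
    have : Tendsto (fun t : ℝ => c * F (max t 0)) atTop (nhds (c * 0)) := by
      apply Tendsto.const_mul
      apply hFtend.comp
      exact tendsto_atTop_mono (fun t => le_max_left t 0) tendsto_id
    simpa using this
  -- conclude
  intro u hu_cont hu_eq
  have heq : ∀ t : ℝ, 0 ≤ t → u t = (∫ τ in (0:ℝ)..t, K t τ * u τ) + φ t := by
    intro t ht
    rw [hu_eq t ht, hφval t ht, hhc, hFeq t ht]
  constructor
  · intro t ht
    exact le_of_lt (hstab' φ hφcont
      (fun t ht => lt_of_lt_of_le (hφsmall t ht) (min_le_left _ _)) u hu_cont heq t ht)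
  · exact hAS' φ hφcont
      (fun t ht => lt_of_lt_of_le (hφsmall t ht) (min_le_right _ _)) hφtend u hu_cont heq
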